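/- Conditional escape lower bound via Jensen: let η′₁, η′₂ be independent infinite self-avoiding walks satisfying P(η^∞[0,m]=ζ) = μ^{−m} P(η^∞ escapes ζ) for all finite SAW paths ζ, with c_n ~ A μ^n, and weak convergence of finite SAW to η^∞. Then for every fixed ξ ∈ SAW_k, liminf_{m→∞} P(η′₁ escapes η′₂[0,m] | η′₂[0,k] = ξ) ≥ A^{−1}. The key inequality is: Σ_{ζ ⪰ ξ, |ζ|=m} P(η^∞[0,m]=ζ)² ≥ (Σ_{ζ ⪰ ξ} P(η^∞[0,m]=ζ))² / c_m(ξ), by the Cauchy–Schwarz/Jensen inequality. -/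

import Mathlib

open MeasureTheory Filter Topology

/-- `x` and `y` are nearest neighbours in `ℤ^d`. -/
def IsNbr (d : ℕ) (x y : Fin d → ℤ) : Prop :=
  (∑ j, (x j - y j).natAbs) = 1

/-- Self-avoiding paths of length `n` in `ℤ^d` started at the origin,
encoded as functions `ℕ → ℤ^d` frozen after time `n`. -/
def SAWset (d n : ℕ) : Set (ℕ → Fin d → ℤ) :=
  {ω | ω 0 = 0 ∧ (∀ i < n, IsNbr d (ω (i + 1)) (ω i)) ∧
    (∀ i ≤ n, ∀ j ≤ n, ω i = ω j → i = j) ∧ ∀ i, n ≤ i → ω i = ω n}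

/-- The number `c_n` of `n`-step self-avoiding paths. -/
noncomputable def cSAW (d n : ℕ) : ℕ := Nat.card (SAWset d n)

/-- The cylinder event that a path starts with `ζ` up to time `k`. -/
def startSet (d k : ℕ) (ζ : ℕ → Fin d → ℤ) : Set (ℕ → Fin d → ℤ) :=
  {ω | ∀ i ≤ k, ω i = ζ i}

/-- The event that a path (translated to start at `ζ k`) escapes `ζ`. -/
def escSet (d k : ℕ) (ζ : ℕ → Fin d → ℤ) : Set (ℕ → Fin d → ℤ) :=
  {ω | ∀ i, 1 ≤ i → ∀ j ≤ k, ω i + ζ k ≠ ζ j}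

/-- `c_m(ζ)`: the number of `m`-step self-avoiding paths starting with `ζ`. -/
noncomputable def cExt (d m k : ℕ) (ζ : ℕ → Fin d → ℤ) : ℕ :=
  Nat.card ((SAWset d m ∩ startSet d k ζ : Set (ℕ → Fin d → ℤ)))

/-- Infinite self-avoiding paths started at the origin. -/
def InfSAW (d : ℕ) : Set (ℕ → Fin d → ℤ) :=
  {ω | ω 0 = 0 ∧ (∀ i, IsNbr d (ω (i + 1)) (ω i)) ∧ Function.Injective ω}

/-- The `m`-fold shift `T^m`: `(T^m ω)(i) = ω(m+i) − ω(m)`. -/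
def shiftW (d m : ℕ) (ω : ℕ → Fin d → ℤ) : ℕ → Fin d → ℤ :=
  fun i => ω (m + i) - ω m

/-- The shift operator `T`. -/
def Tsh (d : ℕ) (ω : ℕ → Fin d → ℤ) : ℕ → Fin d → ℤ :=
  fun i => ω (i + 1) - ω 1


-- measurability
lemma meas_coord (d : ℕ) (i : ℕ) (l : Fin d) :
    Measurable (fun ω : ℕ → Fin d → ℤ => ω i l) :=
  (measurable_pi_apply l).comp (measurable_pi_apply i)

lemma measSet_coord_eq (d : ℕ) (i : ℕ) (l : Fin d) (c : ℤ) :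
    MeasurableSet {ω : ℕ → Fin d → ℤ | ω i l = c} :=
  meas_coord d i l (measurableSet_singleton c)

lemma measSet_eq_const (d : ℕ) (i : ℕ) (v : Fin d → ℤ) :
    MeasurableSet {ω : ℕ → Fin d → ℤ | ω i = v} := by
  have : {ω : ℕ → Fin d → ℤ | ω i = v} = ⋂ l, {ω | ω i l = v l} := by
    ext ω; simp [funext_iff]
  rw [this]
  exact MeasurableSet.iInter fun l => measSet_coord_eq d i l (v l)

lemma measSet_startSet (d k : ℕ) (ζ : ℕ → Fin d → ℤ) :
    MeasurableSet (startSet d k ζ) := by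
  have : startSet d k ζ = ⋂ i ∈ Set.Iic k, {ω : ℕ → Fin d → ℤ | ω i = ζ i} := by
    ext ω; simp [startSet]
  rw [this]
  exact MeasurableSet.biInter (Set.to_countable _) fun i _ => measSet_eq_const d i (ζ i)

lemma measSet_escSet (d k : ℕ) (ζ : ℕ → Fin d → ℤ) :
    MeasurableSet (escSet d k ζ) := by
  have : escSet d k ζ = ⋂ i ∈ Set.Ici 1, ⋂ j ∈ Set.Iic k,
      {ω : ℕ → Fin d → ℤ | ω i = ζ j - ζ k}ᶜ := by
    ext ω
    simp only [escSet, Set.mem_setOf_eq, Set.mem_iInter, Set.mem_compl_iff, Set.mem_Ici,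
      Set.mem_Iic]
    constructor
    · intro h i hi j hj he
      exact h i hi j hj (by rw [he]; ring)
    · intro h i hi j hj he
      exact h i hi j hj (by rw [← he]; ring)
  rw [this]
  exact MeasurableSet.biInter (Set.to_countable _) fun i _ =>
    MeasurableSet.biInter (Set.to_countable _) fun j _ => (measSet_eq_const d i _).compl

lemma measSet_nbr (d : ℕ) (i : ℕ) :
    MeasurableSet {ω : ℕ → Fin d → ℤ | IsNbr d (ω (i+1)) (ω i)} := by
  have hm : Measurable (fun ω : ℕ → Fin d → ℤ => ∑ l, ((ω (i+1) l - ω i l).natAbs)) :=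
    Finset.measurable_sum _ fun l _ =>
      (measurable_from_top (f := Int.natAbs)).comp ((meas_coord d (i+1) l).sub (meas_coord d i l))
  exact hm (measurableSet_singleton 1)

lemma measSet_InfSAW (d : ℕ) : MeasurableSet (InfSAW d) := by
  have h1 : MeasurableSet {ω : ℕ → Fin d → ℤ | ω 0 = 0} := measSet_eq_const d 0 0
  have h2 : MeasurableSet {ω : ℕ → Fin d → ℤ | ∀ i, IsNbr d (ω (i+1)) (ω i)} := by
    have : {ω : ℕ → Fin d → ℤ | ∀ i, IsNbr d (ω (i+1)) (ω i)} =
        ⋂ i, {ω | IsNbr d (ω (i+1)) (ω i)} := by ext ω; simp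
    rw [this]; exact MeasurableSet.iInter fun i => measSet_nbr d i
  have h3 : MeasurableSet {ω : ℕ → Fin d → ℤ | Function.Injective ω} := by
    have : {ω : ℕ → Fin d → ℤ | Function.Injective ω} =
        ⋂ (i : ℕ) (j : ℕ), {ω | ω i = ω j → i = j} := by
      ext ω
      simp only [Set.mem_setOf_eq, Set.mem_iInter, Function.Injective]
    rw [this]
    refine MeasurableSet.iInter fun i => MeasurableSet.iInter fun j => ?_
    by_cases hij : i = j
    · subst hij
      have : {ω : ℕ → Fin d → ℤ | ω i = ω i → i = i} = Set.univ := by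
        ext; simp
      rw [this]; exact MeasurableSet.univ
    · have : {ω : ℕ → Fin d → ℤ | ω i = ω j → i = j} =
          (⋂ l, {ω : ℕ → Fin d → ℤ | ω i l - ω j l = 0})ᶜ := by
        ext ω
        simp only [Set.mem_setOf_eq, Set.mem_compl_iff, Set.mem_iInter, sub_eq_zero]
        constructor
        · intro h hc; exact hij (h (funext fun l => hc l))
        · intro h he; exact absurd (fun l => congrFun he l) h
      rw [this]
      exact (MeasurableSet.iInter fun l =>
        ((meas_coord d i l).sub (meas_coord d j l)) (measurableSet_singleton 0)).compl
  have : InfSAW d = {ω : ℕ → Fin d → ℤ | ω 0 = 0} ∩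
      {ω | ∀ i, IsNbr d (ω (i+1)) (ω i)} ∩ {ω | Function.Injective ω} := by
    ext ω; simp [InfSAW]; tauto
  rw [this]; exact (h1.inter h2).inter h3

-- finiteness of SAWset
lemma SAW_bound (d m : ℕ) {ω : ℕ → Fin d → ℤ} (hω : ω ∈ SAWset d m)
    (i : ℕ) (l : Fin d) : (ω i l).natAbs ≤ m := by
  obtain ⟨h0, hnbr, _, hfr⟩ := hω
  have step : ∀ i < m, (ω (i+1) l - ω i l).natAbs ≤ 1 := by
    intro i hi
    have := hnbr i hi
    unfold IsNbr at this
    calc (ω (i+1) l - ω i l).natAbs ≤ ∑ j, (ω (i+1) j - ω i j).natAbs :=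
          Finset.single_le_sum (f := fun j => (ω (i+1) j - ω i j).natAbs)
            (fun j _ => Nat.zero_le _) (Finset.mem_univ l)
      _ = 1 := this
  have key : ∀ i ≤ m, (ω i l).natAbs ≤ i := by
    intro i
    induction i with
    | zero => intro _; simp [congrFun h0 l]
    | succ n ih =>
      intro hn
      have h1 := ih (Nat.le_of_succ_le hn)
      have h2 := step n hn
      omega
  rcases le_or_gt i m with h | h
  · exact (key i h).trans h
  · rw [hfr i h.le]
    exact key m le_rfl

lemma SAWset_finite (d m : ℕ) : (SAWset d m).Finite := by
  set f : (ℕ → Fin d → ℤ) → (Fin (m+1) → Fin d → ℤ) := fun ω i => ω i with hf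
  have hsub : f '' SAWset d m ⊆
      Set.univ.pi fun _ : Fin (m+1) => Set.univ.pi fun _ : Fin d =>
        Set.Icc (-(m:ℤ)) (m:ℤ) := by
    rintro g ⟨ω, hω, rfl⟩
    simp only [hf, Set.mem_univ_pi, Set.mem_Icc]
    intro i l
    have := SAW_bound d m hω i l
    omega
  have hfin : (f '' SAWset d m).Finite :=
    (Set.Finite.pi fun _ => Set.Finite.pi fun _ => Set.finite_Icc _ _).subset hsub
  have hinj : Set.InjOn f (SAWset d m) := by
    intro ω hω ω' hω' he
    funext i
    rcases le_or_gt i m with h | h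
    · have := congrFun he ⟨i, Nat.lt_succ_of_le h⟩
      simpa using this
    · have e1 := hω.2.2.2 i h.le
      have e2 := hω'.2.2.2 i h.le
      have em : ω m = ω' m := by
        have := congrFun he ⟨m, Nat.lt_succ_self m⟩
        simpa using this
      rw [e1, e2, em]
  exact Set.Finite.of_finite_image hfin hinj

/-- The finset of `m`-step SAWs extending `ξ` (up to time `k`). -/
noncomputable def Fm (d k m : ℕ) (ξ : ℕ → Fin d → ℤ) : Finset (ℕ → Fin d → ℤ) :=
  ((SAWset_finite d m).inter_of_left (startSet d k ξ)).toFinset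

lemma Fm_mem {d k m : ℕ} {ξ ζ : ℕ → Fin d → ℤ} :
    ζ ∈ Fm d k m ξ ↔ ζ ∈ SAWset d m ∩ startSet d k ξ := Set.Finite.mem_toFinset _

lemma Fm_coe (d k m : ℕ) (ξ : ℕ → Fin d → ℤ) :
    (↑(Fm d k m ξ) : Set (ℕ → Fin d → ℤ)) = SAWset d m ∩ startSet d k ξ :=
  Set.Finite.coe_toFinset _

-- freeze
lemma freeze_mem (d m : ℕ) {ω : ℕ → Fin d → ℤ} (hω : ω ∈ InfSAW d) :
    (fun i => ω (min i m)) ∈ SAWset d m := by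
  obtain ⟨h0, hnbr, hinj⟩ := hω
  refine ⟨by simpa using h0, ?_, ?_, ?_⟩
  · intro i hi
    show IsNbr d (ω (min (i+1) m)) (ω (min i m))
    rw [min_eq_left hi, min_eq_left hi.le]
    exact hnbr i
  · intro i hi j hj he
    have he' : ω (min i m) = ω (min j m) := he
    have := hinj he'
    rwa [min_eq_left hi, min_eq_left hj] at this
  · intro i hi
    show ω (min i m) = ω (min m m)
    rw [min_eq_right hi, min_self]

lemma mem_start_freeze (d m : ℕ) (ω : ℕ → Fin d → ℤ) :
    ω ∈ startSet d m (fun i => ω (min i m)) := by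
  intro i hi
  simp [min_eq_left hi]

lemma start_disjoint (d m : ℕ) {ζ ζ' : ℕ → Fin d → ℤ}
    (hζ : ζ ∈ SAWset d m) (hζ' : ζ' ∈ SAWset d m) (hne : ζ ≠ ζ') :
    Disjoint (startSet d m ζ) (startSet d m ζ') := by
  rw [Set.disjoint_left]
  intro ω hω hω'
  apply hne
  funext i
  rcases le_or_gt i m with h | h
  · rw [← hω i h, ← hω' i h]
  · rw [hζ.2.2.2 i h.le, hζ'.2.2.2 i h.le, ← hω m le_rfl, ← hω' m le_rfl]

lemma meas_inter_full {α : Type*} [MeasurableSpace α] (Q : Measure α) [IsProbabilityMeasure Q]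
    {s : Set α} (hs : MeasurableSet s) (h1 : Q s = 1) (t : Set α) : Q (t ∩ s) = Q t := by
  refine le_antisymm (measure_mono Set.inter_subset_left) ?_
  have hcompl : Q sᶜ = 0 := by
    rw [measure_compl hs (measure_ne_top _ _), h1, measure_univ, tsub_self]
  calc Q t = Q ((t ∩ s) ∪ (t \ s)) := by rw [Set.inter_union_diff]
    _ ≤ Q (t ∩ s) + Q (t \ s) := measure_union_le _ _
    _ ≤ Q (t ∩ s) + Q sᶜ := by
        gcongr
        exact fun x hx => hx.2
    _ = Q (t ∩ s) := by rw [hcompl, add_zero]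

lemma freeze_mem_F (d : ℕ) (k m : ℕ) (hkm : k ≤ m) (ξ : ℕ → Fin d → ℤ)
    {ω : ℕ → Fin d → ℤ} (hω : ω ∈ InfSAW d) (hωξ : ω ∈ startSet d k ξ) :
    (fun i => ω (min i m)) ∈ SAWset d m ∩ startSet d k ξ := by
  refine ⟨freeze_mem d m hω, ?_⟩
  intro i hi
  show ω (min i m) = ξ i
  rw [min_eq_left (hi.trans hkm)]
  exact hωξ i hi

lemma start_mono (d : ℕ) (k m : ℕ) (hkm : k ≤ m) (ξ ζ : ℕ → Fin d → ℤ)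
    (hζ : ζ ∈ startSet d k ξ) {ω : ℕ → Fin d → ℤ} (hω : ω ∈ startSet d m ζ) :
    ω ∈ startSet d k ξ := by
  intro i hi
  rw [hω i (hi.trans hkm), hζ i hi]

lemma sum_start_eq (d : ℕ) (P : Measure (ℕ → Fin d → ℤ)) [IsProbabilityMeasure P]
    (hsupp : P (InfSAW d) = 1) (k m : ℕ) (hkm : k ≤ m) (ξ : ℕ → Fin d → ℤ) :
    ∑ ζ ∈ Fm d k m ξ,
      P (startSet d m ζ) = P (startSet d k ξ) := by
  set F := Fm d k m ξ with hF
  have hdecomp : startSet d k ξ ∩ InfSAW d =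
      ⋃ ζ ∈ F, (startSet d m ζ ∩ InfSAW d) := by
    ext ω
    simp only [Set.mem_iUnion, Set.mem_inter_iff, exists_prop]
    constructor
    · rintro ⟨hωξ, hω⟩
      refine ⟨fun i => ω (min i m), ?_, mem_start_freeze d m ω, hω⟩
      rw [hF, Fm_mem]
      exact freeze_mem_F d k m hkm ξ hω hωξ
    · rintro ⟨ζ, hζ, hωζ, hω⟩
      rw [hF, Fm_mem] at hζ
      exact ⟨start_mono d k m hkm ξ ζ hζ.2 hωζ, hω⟩
  have hmeas : ∀ ζ ∈ F, MeasurableSet (startSet d m ζ ∩ InfSAW d) :=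
    fun ζ _ => (measSet_startSet d m ζ).inter (measSet_InfSAW d)
  have hdisj : (↑F : Set (ℕ → Fin d → ℤ)).PairwiseDisjoint
      (fun ζ => startSet d m ζ ∩ InfSAW d) := by
    intro ζ hζ ζ' hζ' hne
    rw [Finset.mem_coe, hF, Fm_mem] at hζ hζ'
    exact Set.disjoint_of_subset Set.inter_subset_left Set.inter_subset_left
      (start_disjoint d m hζ.1 hζ'.1 hne)
  calc ∑ ζ ∈ F, P (startSet d m ζ)
      = ∑ ζ ∈ F, P (startSet d m ζ ∩ InfSAW d) := by
        refine Finset.sum_congr rfl fun ζ _ => ?_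
        rw [meas_inter_full P (measSet_InfSAW d) hsupp]
    _ = P (⋃ ζ ∈ F, (startSet d m ζ ∩ InfSAW d)) :=
        (measure_biUnion_finset hdisj hmeas).symm
    _ = P (startSet d k ξ ∩ InfSAW d) := by rw [hdecomp]
    _ = P (startSet d k ξ) := meas_inter_full P (measSet_InfSAW d) hsupp _

lemma prod_escape_eq (d : ℕ) (P : Measure (ℕ → Fin d → ℤ)) [IsProbabilityMeasure P]
    (hsupp : P (InfSAW d) = 1) (k m : ℕ) (hkm : k ≤ m) (ξ : ℕ → Fin d → ℤ) :
    (P.prod P) {p : (ℕ → Fin d → ℤ) × (ℕ → Fin d → ℤ) |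
        p.2 ∈ startSet d k ξ ∧ ∀ i, 1 ≤ i → ∀ j ≤ m, p.1 i + p.2 m ≠ p.2 j} =
    ∑ ζ ∈ Fm d k m ξ,
      P (escSet d m ζ) * P (startSet d m ζ) := by
  set F := Fm d k m ξ with hF
  set E : Set ((ℕ → Fin d → ℤ) × (ℕ → Fin d → ℤ)) :=
    {p | p.2 ∈ startSet d k ξ ∧ ∀ i, 1 ≤ i → ∀ j ≤ m, p.1 i + p.2 m ≠ p.2 j} with hE
  have hfull : (P.prod P) (Set.univ ×ˢ InfSAW d) = 1 := by
    rw [Measure.prod_prod, measure_univ, hsupp, one_mul]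
  have hdecomp : E ∩ (Set.univ ×ˢ InfSAW d) =
      ⋃ ζ ∈ F, (escSet d m ζ ×ˢ (startSet d m ζ ∩ InfSAW d)) := by
    ext p
    simp only [Set.mem_iUnion, Set.mem_inter_iff, Set.mem_prod, Set.mem_univ, true_and,
      exists_prop, hE, Set.mem_setOf_eq]
    constructor
    · rintro ⟨⟨hpξ, hesc⟩, hp2⟩
      refine ⟨fun i => p.2 (min i m), ?_, ?_, mem_start_freeze d m p.2, hp2⟩
      · rw [hF, Fm_mem]
        exact freeze_mem_F d k m hkm ξ hp2 hpξ
      · intro i hi j hj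
        show p.1 i + p.2 (min m m) ≠ p.2 (min j m)
        rw [min_self, min_eq_left hj]
        exact hesc i hi j hj
    · rintro ⟨ζ, hζ, hesc, hpζ, hp2⟩
      rw [hF, Fm_mem] at hζ
      refine ⟨⟨start_mono d k m hkm ξ ζ hζ.2 hpζ, ?_⟩, hp2⟩
      intro i hi j hj
      rw [hpζ m le_rfl, hpζ j (hj.trans le_rfl)]
      exact hesc i hi j hj
  have hmeas : ∀ ζ ∈ F, MeasurableSet (escSet d m ζ ×ˢ (startSet d m ζ ∩ InfSAW d)) :=
    fun ζ _ => (measSet_escSet d m ζ).prod ((measSet_startSet d m ζ).inter (measSet_InfSAW d))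
  have hdisj : (↑F : Set (ℕ → Fin d → ℤ)).PairwiseDisjoint
      (fun ζ => escSet d m ζ ×ˢ (startSet d m ζ ∩ InfSAW d)) := by
    intro ζ hζ ζ' hζ' hne
    rw [Finset.mem_coe, hF, Fm_mem] at hζ hζ'
    simp only [Function.onFun]
    rw [Set.disjoint_left]
    rintro p ⟨_, hp2, _⟩ ⟨_, hp2', _⟩
    exact Set.disjoint_left.1 (start_disjoint d m hζ.1 hζ'.1 hne) hp2 hp2'
  calc (P.prod P) E = (P.prod P) (E ∩ (Set.univ ×ˢ InfSAW d)) :=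
        (meas_inter_full (P.prod P) (MeasurableSet.univ.prod (measSet_InfSAW d)) hfull E).symm
    _ = (P.prod P) (⋃ ζ ∈ F, (escSet d m ζ ×ˢ (startSet d m ζ ∩ InfSAW d))) := by
        rw [hdecomp]
    _ = ∑ ζ ∈ F, (P.prod P) (escSet d m ζ ×ˢ (startSet d m ζ ∩ InfSAW d)) := by
        exact measure_biUnion_finset hdisj hmeas
    _ = ∑ ζ ∈ F, P (escSet d m ζ) * P (startSet d m ζ) := by
        refine Finset.sum_congr rfl fun ζ _ => ?_
        rw [Measure.prod_prod, meas_inter_full P (measSet_InfSAW d) hsupp]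

/-- conditional escape lower bound via Jensen. For independent infinite
SAWs `η′₁, η′₂`, `liminf_m P(η′₁ escapes η′₂[0,m] | η′₂[0,k] = ξ) ≥ A⁻¹`, together with
the key Cauchy–Schwarz/Jensen inequality
`Σ_{ζ ⪰ ξ} P(η[0,m]=ζ)² ≥ (Σ_{ζ ⪰ ξ} P(η[0,m]=ζ))² / c_m(ξ)`. -/
theorem conditional_escape_liminf (d : ℕ) (P : Measure (ℕ → Fin d → ℤ))
    [IsProbabilityMeasure P] (hsupp : P (InfSAW d) = 1)
    (A μ : ℝ) (hA : 0 < A) (hμ : 0 < μ)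
    (hdmp : ∀ m (ζ : ℕ → Fin d → ℤ), ζ ∈ SAWset d m →
      (P (startSet d m ζ)).toReal = μ⁻¹ ^ m * (P (escSet d m ζ)).toReal)
    (hasymp : Tendsto (fun n => (cSAW d n : ℝ) / (A * μ ^ n)) atTop (𝓝 1))
    (hweak : ∀ k (ζ : ℕ → Fin d → ℤ), ζ ∈ SAWset d k →
      Tendsto (fun n => (cExt d n k ζ : ℝ) / (cSAW d n)) atTop
        (𝓝 ((P (startSet d k ζ)).toReal)))
    (k : ℕ) (ξ : ℕ → Fin d → ℤ) (hξ : ξ ∈ SAWset d k)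
    (hpos : 0 < (P (startSet d k ξ)).toReal) :
    A⁻¹ ≤ atTop.liminf (fun m : ℕ =>
        ((P.prod P) {p : (ℕ → Fin d → ℤ) × (ℕ → Fin d → ℤ) |
            p.2 ∈ startSet d k ξ ∧
            ∀ i, 1 ≤ i → ∀ j ≤ m, p.1 i + p.2 m ≠ p.2 j}).toReal /
          (P (startSet d k ξ)).toReal) ∧
    ∀ m, k ≤ m →
      (∑ᶠ ζ ∈ (SAWset d m ∩ startSet d k ξ), (P (startSet d m ζ)).toReal) ^ 2
        ≤ (∑ᶠ ζ ∈ (SAWset d m ∩ startSet d k ξ), (P (startSet d m ζ)).toReal ^ 2) *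
            (cExt d m k ξ : ℝ) := by
  set Pξ : ℝ := (P (startSet d k ξ)).toReal with hPξ
  have hcard : ∀ m, cExt d m k ξ = (Fm d k m ξ).card := by
    intro m
    rw [cExt, Nat.card_coe_set_eq,
      Set.ncard_eq_toFinset_card _ ((SAWset_finite d m).inter_of_left (startSet d k ξ))]
    rfl
  -- Jensen / Cauchy-Schwarz part
  have part2 : ∀ m, k ≤ m →
      (∑ᶠ ζ ∈ (SAWset d m ∩ startSet d k ξ), (P (startSet d m ζ)).toReal) ^ 2
        ≤ (∑ᶠ ζ ∈ (SAWset d m ∩ startSet d k ξ), (P (startSet d m ζ)).toReal ^ 2) *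
            (cExt d m k ξ : ℝ) := by
    intro m _
    rw [← Fm_coe d k m ξ, finsum_mem_coe_finset, finsum_mem_coe_finset, hcard m]
    have h := Finset.sum_mul_sq_le_sq_mul_sq (Fm d k m ξ)
      (fun ζ => (P (startSet d m ζ)).toReal) (fun _ => 1)
    simpa using h
  refine ⟨?_, part2⟩
  -- total-mass identity
  have hS : ∀ m, k ≤ m → ∑ ζ ∈ Fm d k m ξ, (P (startSet d m ζ)).toReal = Pξ := by
    intro m hm
    rw [hPξ, ← sum_start_eq d P hsupp k m hm ξ,
      ENNReal.toReal_sum (fun ζ _ => measure_ne_top P _)]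
  -- escape factorization
  have hE : ∀ m, k ≤ m →
      ((P.prod P) {p : (ℕ → Fin d → ℤ) × (ℕ → Fin d → ℤ) |
          p.2 ∈ startSet d k ξ ∧
          ∀ i, 1 ≤ i → ∀ j ≤ m, p.1 i + p.2 m ≠ p.2 j}).toReal =
      μ ^ m * ∑ ζ ∈ Fm d k m ξ, (P (startSet d m ζ)).toReal ^ 2 := by
    intro m hm
    rw [prod_escape_eq d P hsupp k m hm ξ,
      ENNReal.toReal_sum (fun ζ _ => ENNReal.mul_ne_top (measure_ne_top P _) (measure_ne_top P _)),
      Finset.mul_sum]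
    refine Finset.sum_congr rfl fun ζ hζ => ?_
    have hζ' := (Fm_mem.1 hζ).1
    have hd := hdmp m ζ hζ'
    have hesc : (P (escSet d m ζ)).toReal = μ ^ m * (P (startSet d m ζ)).toReal := by
      rw [hd, ← mul_assoc, ← mul_pow, mul_inv_cancel₀ hμ.ne', one_pow, one_mul]
    rw [ENNReal.toReal_mul, hesc]
    ring
  -- positivity of the cardinality
  have hcpos : ∀ m, k ≤ m → 0 < (Fm d k m ξ).card := by
    intro m hm
    rw [Finset.card_pos]
    by_contra h
    rw [Finset.not_nonempty_iff_eq_empty] at h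
    have := hS m hm
    rw [h, Finset.sum_empty] at this
    exact hpos.ne' this.symm
  -- pointwise lower bound
  have hlow : ∀ m, k ≤ m →
      μ ^ m * Pξ / (cExt d m k ξ : ℝ) ≤
      ((P.prod P) {p : (ℕ → Fin d → ℤ) × (ℕ → Fin d → ℤ) |
          p.2 ∈ startSet d k ξ ∧
          ∀ i, 1 ≤ i → ∀ j ≤ m, p.1 i + p.2 m ≠ p.2 j}).toReal / Pξ := by
    intro m hm
    rw [hE m hm, hcard m]
    set S2 := ∑ ζ ∈ Fm d k m ξ, (P (startSet d m ζ)).toReal ^ 2 with hS2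
    have hJ : Pξ ^ 2 ≤ S2 * (Fm d k m ξ).card := by
      have := part2 m hm
      rwa [← Fm_coe d k m ξ, finsum_mem_coe_finset, finsum_mem_coe_finset, hcard m,
        hS m hm] at this
    have hc : (0:ℝ) < (Fm d k m ξ).card := by exact_mod_cast hcpos m hm
    rw [div_le_div_iff₀ hc hpos]
    have hμm : (0:ℝ) < μ ^ m := pow_pos hμ m
    nlinarith [hJ, hμm, hpos]
  -- the comparison sequence tends to A⁻¹
  have hcle : ∀ n, k ≤ n → cExt d n k ξ ≤ cSAW d n := by
    intro n _
    rw [cExt, cSAW, Nat.card_coe_set_eq, Nat.card_coe_set_eq]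
    exact Set.ncard_le_ncard Set.inter_subset_left (SAWset_finite d n)
  have hh : Tendsto (fun n => μ ^ n * Pξ / (cExt d n k ξ : ℝ)) atTop (𝓝 A⁻¹) := by
    have ha := hweak k ξ hξ
    have hb := hasymp
    have hden : Tendsto (fun n => ((cExt d n k ξ : ℝ) / (cSAW d n)) *
        ((cSAW d n : ℝ) / (A * μ ^ n)) * A) atTop (𝓝 (Pξ * 1 * A)) :=
      (ha.mul hb).mul tendsto_const_nhds
    have hne : Pξ * 1 * A ≠ 0 := by positivity
    have hlim := (tendsto_const_nhds (x := Pξ)).div hden hne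
    have heq : Pξ / (Pξ * 1 * A) = A⁻¹ := by
      field_simp
    rw [heq] at hlim
    refine hlim.congr' ?_
    filter_upwards [eventually_ge_atTop k] with n hn
    have h1 : 0 < cExt d n k ξ := by rw [hcard n]; exact hcpos n hn
    have h2 : 0 < cSAW d n := lt_of_lt_of_le h1 (hcle n hn)
    have h1' : (0:ℝ) < (cExt d n k ξ : ℝ) := by exact_mod_cast h1
    have h2' : (0:ℝ) < (cSAW d n : ℝ) := by exact_mod_cast h2
    have hμn : (0:ℝ) < μ ^ n := pow_pos hμ n
    simp only [Pi.div_apply]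
    field_simp
  -- conclude via liminf comparison
  have hlim_eq : atTop.liminf (fun n => μ ^ n * Pξ / (cExt d n k ξ : ℝ)) = A⁻¹ :=
    hh.liminf_eq
  rw [← hlim_eq]
  refine Filter.liminf_le_liminf ?_ hh.isBoundedUnder_ge ?_
  · filter_upwards [eventually_ge_atTop k] with m hm using hlow m hm
  · refine Filter.IsBoundedUnder.isCoboundedUnder_ge ⟨Pξ⁻¹, ?_⟩
    refine Filter.eventually_map.2 (Filter.Eventually.of_forall fun m => ?_)
    have hx : ((P.prod P) {p : (ℕ → Fin d → ℤ) × (ℕ → Fin d → ℤ) |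
          p.2 ∈ startSet d k ξ ∧
          ∀ i, 1 ≤ i → ∀ j ≤ m, p.1 i + p.2 m ≠ p.2 j}).toReal ≤ 1 := by
      refine ENNReal.toReal_le_of_le_ofReal one_pos.le ?_
      simpa using prob_le_one
    dsimp only
    rw [div_le_iff₀ hpos, inv_mul_cancel₀ hpos.ne']
    exact hx
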